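/- In the poset M(n), the lower interval [∅, A] is rank-symmetric (palindromic) if and only if A = ∅, A = {k} for some 1 ≤ k ≤ n, or A = {1,2,...,k} for some 1 ≤ k ≤ n. -/

import Mathlib

/-- The `i`-th largest element of a finite set of naturals (`i = 0` gives the largest);
defaults to `0` out of range. -/
def kthLargest (A : Finset ℕ) (i : ℕ) : ℕ :=
  ((A.sort (· ≤ ·)).reverse).getD i 0

/-- The order on `M(n)`: for `A = {a_1 < ... < a_j}` and `B = {b_1 < ... < b_k}`,
`A ⪯ B` iff `j ≤ k` and the `i`-th largest element of `A` is at most the `i`-th largest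
element of `B` for all `0 ≤ i ≤ j - 1`. -/
def MLE (A B : Finset ℕ) : Prop :=
  A.card ≤ B.card ∧ ∀ i < A.card, kthLargest A i ≤ kthLargest B i

/-- Strict version of `MLE`. -/
def MLT (A B : Finset ℕ) : Prop := MLE A B ∧ A ≠ B

/-- The covering relation of the poset `M(n)` (subsets of `{1, ..., n}` ordered by `MLE`). -/
def MCovBy (n : ℕ) (A B : Finset ℕ) : Prop :=
  MLT A B ∧ ∀ C ⊆ Finset.Icc 1 n, ¬(MLT A C ∧ MLT C B)

theorem key_list (m : ℕ) : ∀ (L : List ℕ), L.Pairwise (fun a b => b ≤ a) →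
    ∀ i < L.length, (L.getD i 0 ≤ m ↔ L.countP (fun x => decide (m < x)) ≤ i) := by
  intro L
  induction L with
  | nil => intro _ i hi; simp at hi
  | cons x t ih =>
    intro hs i hi
    have hst : t.Pairwise (fun a b => b ≤ a) := hs.of_cons
    have hx : ∀ y ∈ t, y ≤ x := fun y hy => List.rel_of_pairwise_cons hs hy
    match i with
    | 0 =>
      simp only [List.getD_cons_zero, List.countP_cons, Nat.le_zero]
      constructor
      · intro hxm
        have h0 : t.countP (fun x => decide (m < x)) = 0 := by
          rw [List.countP_eq_zero]
          intro y hy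
          simp only [decide_eq_true_eq, not_lt]
          exact le_trans (hx y hy) hxm
        simp [h0, Nat.not_lt.2 hxm]
      · intro h
        by_contra hc
        simp [Nat.lt_of_not_le hc] at h
    | i + 1 =>
      simp only [List.getD_cons_succ, List.countP_cons]
      by_cases hxm : m < x
      · have hd : (if decide (m < x) = true then 1 else 0) = 1 := by simp [hxm]
        rw [hd, ih hst i (by simpa using hi)]
        omega
      · have h0 : t.countP (fun x => decide (m < x)) = 0 := by
          rw [List.countP_eq_zero]
          intro y hy
          simp only [decide_eq_true_eq, not_lt]
          exact le_trans (hx y hy) (Nat.not_lt.1 hxm)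
        have hg : t.getD i 0 ≤ m := by
          rcases Nat.lt_or_ge i t.length with h | h
          · rw [List.getD_eq_getElem t 0 h]
            exact le_trans (hx _ (List.getElem_mem h)) (Nat.not_lt.1 hxm)
          · rw [List.getD_eq_default _ _ h]; exact Nat.zero_le m
        rw [List.getD_eq_getElem?_getD] at hg
        simp [h0, hg, hxm]

theorem countD (A : Finset ℕ) (m : ℕ) :
    ((A.sort (· ≤ ·)).reverse).countP (fun x => decide (m < x)) =
      (A.filter (fun x => m < x)).card := by
  rw [List.countP_reverse]
  have h1 : (A.sort (· ≤ ·) : Multiset ℕ) = A.val := Finset.sort_eq _ _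
  have := Multiset.coe_countP (fun x => m < x) (A.sort (· ≤ ·))
  rw [h1] at this
  rw [← this]
  rw [Multiset.countP_eq_card_filter]; rfl

theorem sorted_rev (A : Finset ℕ) : (A.sort (· ≤ ·)).reverse.Pairwise (fun a b => b ≤ a) := by
  have := Finset.pairwise_sort A (· ≤ ·)
  rw [List.pairwise_reverse]
  exact this

theorem kthLargest_le_iff (A : Finset ℕ) (m i : ℕ) (hi : i < A.card) :
    kthLargest A i ≤ m ↔ (A.filter (fun x => m < x)).card ≤ i := by
  rw [← countD]
  exact key_list m _ (sorted_rev A) i (by simp [Finset.length_sort]; omega)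

theorem mle_iff (B A : Finset ℕ) : MLE B A ↔ B.card ≤ A.card ∧
    ∀ m, (B.filter (fun x => m < x)).card ≤ (A.filter (fun x => m < x)).card := by
  constructor
  · rintro ⟨hc, h⟩
    refine ⟨hc, fun m => ?_⟩
    by_contra hcon
    set i := (A.filter (fun x => m < x)).card with hidef
    have hlt : i < (B.filter (fun x => m < x)).card := Nat.lt_of_not_le hcon
    have hiB : i < B.card := lt_of_lt_of_le hlt (Finset.card_filter_le _ _)
    have hiA : i < A.card := lt_of_lt_of_le hiB hc
    have h1 : kthLargest A i ≤ m := (kthLargest_le_iff A m i hiA).2 (le_refl i)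
    have h2 : kthLargest B i ≤ m := le_trans (h i hiB) h1
    exact Nat.not_le.2 hlt ((kthLargest_le_iff B m i hiB).1 h2)
  · rintro ⟨hc, h⟩
    refine ⟨hc, fun i hi => ?_⟩
    apply (kthLargest_le_iff B (kthLargest A i) i hi).2
    exact le_trans (h _) ((kthLargest_le_iff A _ i (lt_of_lt_of_le hi hc)).1 (le_refl _))

theorem mle_of_subset {B A : Finset ℕ} (h : B ⊆ A) : MLE B A := by
  rw [mle_iff]
  exact ⟨Finset.card_le_card h, fun m => Finset.card_le_card (Finset.filter_subset_filter _ h)⟩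

theorem mle_replace {A : Finset ℕ} {a b : ℕ} (ha : a ∈ A) (hb : b ∉ A) (hba : b < a) :
    MLE (insert b (A.erase a)) A := by
  rw [mle_iff]
  have hbe : b ∉ A.erase a := fun h => hb (Finset.mem_of_mem_erase h)
  constructor
  · rw [Finset.card_insert_of_notMem hbe, Finset.card_erase_of_mem ha]
    have := Finset.card_pos.2 ⟨a, ha⟩
    omega
  · intro m
    rw [Finset.filter_insert]
    by_cases hmb : m < b
    · rw [if_pos hmb]
      have hae : a ∈ A.filter (fun x => m < x) := Finset.mem_filter.2 ⟨ha, lt_trans hmb hba⟩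
      have hbf : b ∉ (A.erase a).filter (fun x => m < x) := fun h => hbe (Finset.mem_filter.1 h).1
      rw [Finset.card_insert_of_notMem hbf]
      have : (A.erase a).filter (fun x => m < x) = (A.filter (fun x => m < x)).erase a := by
        rw [Finset.filter_erase]
      rw [this, Finset.card_erase_of_mem hae]
      have := Finset.card_pos.2 ⟨a, hae⟩
      omega
    · rw [if_neg hmb]
      calc ((A.erase a).filter (fun x => m < x)).card
          ≤ (A.filter (fun x => m < x)).card :=
            Finset.card_le_card (Finset.filter_subset_filter _ (Finset.erase_subset _ _))

theorem mle_singleton {j k : ℕ} (h : j ≤ k) : MLE {j} {k} := by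
  rw [mle_iff]
  refine ⟨le_refl _, fun m => ?_⟩
  rw [Finset.filter_singleton, Finset.filter_singleton]
  split_ifs with h1 h2 h2 <;> simp <;> omega

theorem mle_Icc_iff {n k : ℕ} (B : Finset ℕ) (hB : B ⊆ Finset.Icc 1 n) :
    MLE B (Finset.Icc 1 k) ↔ B ⊆ Finset.Icc 1 k := by
  constructor
  · intro h
    rw [mle_iff] at h
    have h0 : ((Finset.Icc 1 k).filter (fun x => k < x)).card = 0 := by
      rw [Finset.card_eq_zero, Finset.filter_eq_empty_iff]
      intro x hx
      simp only [Finset.mem_Icc] at hx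
      omega
    have := h.2 k
    rw [h0, Nat.le_zero, Finset.card_eq_zero, Finset.filter_eq_empty_iff] at this
    intro b hb
    have h1 := hB hb
    simp only [Finset.mem_Icc] at *
    have := this hb
    omega
  · exact mle_of_subset

theorem sum_replace {A : Finset ℕ} {a b : ℕ} (ha : a ∈ A) (hb : b ∉ A) :
    (∑ x ∈ insert b (A.erase a), x) + a = (∑ x ∈ A, x) + b := by
  have hbe : b ∉ A.erase a := fun h => hb (Finset.mem_of_mem_erase h)
  rw [Finset.sum_insert hbe]
  have := Finset.sum_erase_add A id ha
  simp only [id] at this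
  omega

theorem le_sum_of_mem {B : Finset ℕ} {b : ℕ} (hb : b ∈ B) : b ≤ ∑ x ∈ B, x :=
  Finset.single_le_sum (fun i _ => Nat.zero_le i) hb

theorem sum_eq_one {n : ℕ} {B : Finset ℕ} (hB : B ⊆ Finset.Icc 1 n) (h : ∑ x ∈ B, x = 1) :
    B = {1} := by
  have hne : B.Nonempty := by
    rcases Finset.eq_empty_or_nonempty B with rfl | h2
    · simp at h
    · exact h2
  have hsub : B ⊆ {1} := by
    intro b hb
    have h1 := hB hb
    have h2 := le_sum_of_mem hb
    simp only [Finset.mem_Icc] at h1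
    simp only [Finset.mem_singleton]
    omega
  obtain ⟨b, hb⟩ := hne
  have := hsub hb
  simp only [Finset.mem_singleton] at this
  subst this
  exact Finset.Subset.antisymm hsub (Finset.singleton_subset_iff.2 hb)

theorem sum_eq_two {n : ℕ} {B : Finset ℕ} (hB : B ⊆ Finset.Icc 1 n) (h : ∑ x ∈ B, x = 2) :
    B = {2} := by
  have h2 : 2 ∈ B := by
    by_contra h2
    have hsub : B ⊆ {1} := by
      intro b hb
      have h1 := hB hb
      have h3 := le_sum_of_mem hb
      rw [h] at h3
      simp only [Finset.mem_Icc] at h1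
      simp only [Finset.mem_singleton]
      have hb2 : b ≠ 2 := fun hbb => h2 (hbb ▸ hb)
      omega
    have := Finset.sum_le_sum_of_subset hsub (f := id)
    simp only [id, Finset.sum_singleton] at this
    rw [h] at this
    omega
  have h1 : 1 ∉ B := by
    intro h1
    have : ({1, 2} : Finset ℕ) ⊆ B := by
      intro x hx
      simp only [Finset.mem_insert, Finset.mem_singleton] at hx
      rcases hx with rfl | rfl <;> assumption
    have := Finset.sum_le_sum_of_subset this (f := id)
    simp only [id] at this
    rw [h] at this
    norm_num at this
  have hsub : B ⊆ {2} := by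
    intro b hb
    have hbn := hB hb
    have h3 := le_sum_of_mem hb
    rw [h] at h3
    simp only [Finset.mem_Icc] at hbn
    simp only [Finset.mem_singleton]
    have hb1 : b ≠ 1 := fun hbb => h1 (hbb ▸ hb)
    omega
  exact Finset.Subset.antisymm hsub (Finset.singleton_subset_iff.2 h2)

open scoped Classical in
/-- In `M(n)`, the lower interval `[∅, A]` is rank-symmetric (palindromic) with respect to
the rank function `rk(A) = Σ_{a ∈ A} a` if and only if `A = ∅`, `A = {k}` for some
`1 ≤ k ≤ n`, or `A = {1, ..., k}` for some `1 ≤ k ≤ n`. -/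
theorem palindromic_iff (n : ℕ) (A : Finset ℕ) (hA : A ⊆ Finset.Icc 1 n) :
    (∀ i ≤ ∑ a ∈ A, a,
      ((Finset.Icc 1 n).powerset.filter (fun B => MLE B A ∧ ∑ a ∈ B, a = i)).card =
      ((Finset.Icc 1 n).powerset.filter
        (fun B => MLE B A ∧ ∑ a ∈ B, a = (∑ a ∈ A, a) - i)).card) ↔
    (A = ∅ ∨ (∃ k : ℕ, 1 ≤ k ∧ k ≤ n ∧ A = {k}) ∨
      (∃ k : ℕ, 1 ≤ k ∧ k ≤ n ∧ A = Finset.Icc 1 k)) := by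
  constructor
  · intro H
    rcases Finset.eq_empty_or_nonempty A with rfl | hne
    · exact Or.inl rfl
    right
    set m := A.min' hne with hmdef
    set M := A.max' hne with hMdef
    have hmA : m ∈ A := A.min'_mem hne
    have hMA : M ∈ A := A.max'_mem hne
    have hm1 : 1 ≤ m := by have := hA hmA; simp only [Finset.mem_Icc] at this; omega
    have hMn : M ≤ n := by have := hA hMA; simp only [Finset.mem_Icc] at this; omega
    have hmM : m ≤ M := A.min'_le M hMA
    have hMS : M ≤ ∑ a ∈ A, a := le_sum_of_mem hMA
    have hS1 : 1 ≤ ∑ a ∈ A, a := by omega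
    have hrepl : ∀ a b : ℕ, a ∈ A → b ∉ A → b < a → 1 ≤ b →
        (insert b (A.erase a)) ⊆ Finset.Icc 1 n ∧ MLE (insert b (A.erase a)) A ∧
        (∑ x ∈ insert b (A.erase a), x) = (∑ a ∈ A, a) - (a - b) := by
      intro a b ha hb hba hb1
      have han : a ≤ n := by have := hA ha; simp only [Finset.mem_Icc] at this; omega
      have haS : a ≤ ∑ x ∈ A, x := le_sum_of_mem ha
      refine ⟨?_, mle_replace ha hb hba, ?_⟩
      · apply Finset.insert_subset
        · simp only [Finset.mem_Icc]; omega
        · exact (Finset.erase_subset _ _).trans hA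
      · have := sum_replace ha hb
        omega
    have hrank1 : ((Finset.Icc 1 n).powerset.filter
        (fun B => MLE B A ∧ ∑ a ∈ B, a = 1)).card ≤ 1 := by
      apply Finset.card_le_one.2
      intro C1 h1 C2 h2
      simp only [Finset.mem_filter, Finset.mem_powerset] at h1 h2
      rw [sum_eq_one h1.1 h1.2.2, sum_eq_one h2.1 h2.2.2]
    have hIcc : A = Finset.Icc m M := by
      by_contra hne2
      have hsub : A ⊆ Finset.Icc m M := fun a ha =>
        Finset.mem_Icc.2 ⟨A.min'_le a ha, A.le_max' a ha⟩
      obtain ⟨g, hgI, hgA⟩ := Finset.exists_of_ssubset (ssubset_of_subset_of_ne hsub hne2)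
      simp only [Finset.mem_Icc] at hgI
      have hgm : m < g := lt_of_le_of_ne hgI.1 (fun h => hgA (h ▸ hmA))
      have hgM : g < M := lt_of_le_of_ne hgI.2 (fun h => hgA (h ▸ hMA))
      set S' := A.filter (fun x => g < x) with hS'def
      have hS'ne : S'.Nonempty := ⟨M, Finset.mem_filter.2 ⟨hMA, hgM⟩⟩
      set a := S'.min' hS'ne with hadef
      have haS' : a ∈ S' := S'.min'_mem hS'ne
      have ha : a ∈ A := (Finset.mem_filter.1 haS').1
      have hga : g < a := (Finset.mem_filter.1 haS').2
      have ha1 : a - 1 ∉ A := by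
        intro hc
        by_cases hga1 : g = a - 1
        · exact hgA (hga1 ▸ hc)
        · have hmem : a - 1 ∈ S' := Finset.mem_filter.2 ⟨hc, by omega⟩
          have := S'.min'_le _ hmem
          omega
      obtain ⟨hB1n, hB1mle, hB1sum⟩ := hrepl a (a - 1) ha ha1 (by omega) (by omega)
      have hB1sum' : (∑ x ∈ insert (a - 1) (A.erase a), x) = (∑ a ∈ A, a) - 1 := by
        rw [hB1sum]; congr 1; omega
      have hmB1 : m ∈ insert (a - 1) (A.erase a) :=
        Finset.mem_insert_of_mem (Finset.mem_erase.2 ⟨by omega, hmA⟩)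
      have hkey : 1 < ((Finset.Icc 1 n).powerset.filter
          (fun B => MLE B A ∧ ∑ a ∈ B, a = (∑ a ∈ A, a) - 1)).card := by
        rw [Finset.one_lt_card]
        by_cases hm : m = 1
        · refine ⟨insert (a - 1) (A.erase a), ?_, A.erase 1, ?_, ?_⟩
          · exact Finset.mem_filter.2 ⟨Finset.mem_powerset.2 hB1n, hB1mle, hB1sum'⟩
          · refine Finset.mem_filter.2 ⟨Finset.mem_powerset.2 ((Finset.erase_subset _ _).trans hA),
              mle_of_subset (Finset.erase_subset _ _), ?_⟩
            have := Finset.sum_erase_add A id (hm ▸ hmA)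
            simp only [id] at this
            omega
          · intro hcon
            have : m ∈ A.erase 1 := hcon ▸ hmB1
            rw [hm] at this
            exact absurd this (Finset.notMem_erase _ _)
        · have hm1A : m - 1 ∉ A := by
            intro hc
            have := A.min'_le _ hc
            omega
          obtain ⟨hB2n, hB2mle, hB2sum⟩ := hrepl m (m - 1) hmA hm1A (by omega) (by omega)
          refine ⟨insert (a - 1) (A.erase a), ?_, insert (m - 1) (A.erase m), ?_, ?_⟩
          · exact Finset.mem_filter.2 ⟨Finset.mem_powerset.2 hB1n, hB1mle, hB1sum'⟩
          · refine Finset.mem_filter.2 ⟨Finset.mem_powerset.2 hB2n, hB2mle, ?_⟩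
            rw [hB2sum]; congr 1; omega
          · intro hcon
            have : m ∈ insert (m - 1) (A.erase m) := hcon ▸ hmB1
            rcases Finset.mem_insert.1 this with h | h
            · omega
            · exact absurd h (Finset.notMem_erase _ _)
      have := H 1 hS1
      omega
    by_cases hm : m = 1
    · exact Or.inr ⟨M, by omega, hMn, by rw [hIcc, hm]⟩
    by_cases hmM' : m = M
    · refine Or.inl ⟨m, hm1, by omega, ?_⟩
      rw [hIcc, ← hmM', Finset.Icc_self]
    -- now 2 ≤ m < M : contradiction
    exfalso
    have hm2 : 2 ≤ m := by omega
    have hmM2 : m + 1 ≤ M := by omega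
    have hS2 : 2 ≤ ∑ a ∈ A, a := by omega
    have hrank2 : ((Finset.Icc 1 n).powerset.filter
        (fun B => MLE B A ∧ ∑ a ∈ B, a = 2)).card ≤ 1 := by
      apply Finset.card_le_one.2
      intro C1 h1 C2 h2
      simp only [Finset.mem_filter, Finset.mem_powerset] at h1 h2
      rw [sum_eq_two h1.1 h1.2.2, sum_eq_two h2.1 h2.2.2]
    have hmp1A : m + 1 ∈ A := by rw [hIcc]; simp only [Finset.mem_Icc]; omega
    have hm1A : m - 1 ∉ A := by rw [hIcc]; simp only [Finset.mem_Icc]; omega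
    obtain ⟨hC1n, hC1mle, hC1sum⟩ := hrepl (m + 1) (m - 1) hmp1A hm1A (by omega) (by omega)
    have hC1sum' : (∑ x ∈ insert (m - 1) (A.erase (m + 1)), x) = (∑ a ∈ A, a) - 2 := by
      rw [hC1sum]; congr 1; omega
    have hm1C1 : m - 1 ∈ insert (m - 1) (A.erase (m + 1)) := Finset.mem_insert_self _ _
    have hkey : 1 < ((Finset.Icc 1 n).powerset.filter
        (fun B => MLE B A ∧ ∑ a ∈ B, a = (∑ a ∈ A, a) - 2)).card := by
      rw [Finset.one_lt_card]
      by_cases hm2' : m = 2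
      · refine ⟨insert (m - 1) (A.erase (m + 1)), ?_, A.erase 2, ?_, ?_⟩
        · exact Finset.mem_filter.2 ⟨Finset.mem_powerset.2 hC1n, hC1mle, hC1sum'⟩
        · refine Finset.mem_filter.2 ⟨Finset.mem_powerset.2 ((Finset.erase_subset _ _).trans hA),
            mle_of_subset (Finset.erase_subset _ _), ?_⟩
          have := Finset.sum_erase_add A id (hm2' ▸ hmA)
          simp only [id] at this
          omega
        · intro hcon
          have h1m : m - 1 ∈ A.erase 2 := hcon ▸ hm1C1
          have : m - 1 ∈ A := Finset.mem_of_mem_erase h1m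
          exact hm1A this
      · have hm2A : m - 2 ∉ A := by rw [hIcc]; simp only [Finset.mem_Icc]; omega
        obtain ⟨hC2n, hC2mle, hC2sum⟩ := hrepl m (m - 2) hmA hm2A (by omega) (by omega)
        refine ⟨insert (m - 1) (A.erase (m + 1)), ?_, insert (m - 2) (A.erase m), ?_, ?_⟩
        · exact Finset.mem_filter.2 ⟨Finset.mem_powerset.2 hC1n, hC1mle, hC1sum'⟩
        · refine Finset.mem_filter.2 ⟨Finset.mem_powerset.2 hC2n, hC2mle, ?_⟩
          rw [hC2sum]; congr 1; omega
        · intro hcon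
          have h1m : m - 1 ∈ insert (m - 2) (A.erase m) := hcon ▸ hm1C1
          rcases Finset.mem_insert.1 h1m with h | h
          · omega
          · exact hm1A (Finset.mem_of_mem_erase h)
    have := H 2 hS2
    omega
  · rintro (rfl | ⟨k, hk1, hkn, rfl⟩ | ⟨k, hk1, hkn, rfl⟩) i hi
    · -- A = ∅
      simp only [Finset.sum_empty, Nat.le_zero] at hi
      subst hi
      rfl
    · -- A = {k}
      rw [Finset.sum_singleton] at hi ⊢
      have key : ∀ v ≤ k,
          ((Finset.Icc 1 n).powerset.filter (fun B => MLE B {k} ∧ ∑ a ∈ B, a = v)).card = 1 := by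
        intro v hv
        rw [Finset.card_eq_one]
        refine ⟨if v = 0 then ∅ else {v}, ?_⟩
        ext C
        simp only [Finset.mem_filter, Finset.mem_powerset, Finset.mem_singleton]
        constructor
        · rintro ⟨hCn, hmle, hsum⟩
          have hcard : C.card ≤ 1 := by simpa using hmle.1
          obtain ⟨c, hc⟩ := Finset.card_le_one_iff_subset_singleton.1 hcard
          by_cases hv0 : v = 0
          · rw [if_pos hv0]
            subst hv0
            rcases Finset.eq_empty_or_nonempty C with rfl | ⟨b, hb⟩
            · rfl
            · exfalso
              have h1 := hCn hb
              have h2 := le_sum_of_mem hb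
              simp only [Finset.mem_Icc] at h1
              omega
          · rw [if_neg hv0]
            rcases Finset.eq_empty_or_nonempty C with rfl | ⟨b, hb⟩
            · exfalso; simp at hsum; exact hv0 hsum.symm
            · have hbc := hc hb
              simp only [Finset.mem_singleton] at hbc
              subst hbc
              have : C = {b} := Finset.Subset.antisymm hc (Finset.singleton_subset_iff.2 hb)
              subst this
              rw [Finset.sum_singleton] at hsum
              rw [hsum]
        · intro hC
          by_cases hv0 : v = 0
          · rw [if_pos hv0] at hC
            subst hC hv0
            exact ⟨Finset.empty_subset _, ⟨by simp, fun i hi => by simp at hi⟩, by simp⟩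
          · rw [if_neg hv0] at hC
            subst hC
            refine ⟨?_, mle_singleton hv, Finset.sum_singleton _ _⟩
            simp only [Finset.singleton_subset_iff, Finset.mem_Icc]
            omega
      rw [key i hi, key (k - i) (Nat.sub_le _ _)]
    · -- A = Icc 1 k
      have hsub : Finset.Icc 1 k ⊆ Finset.Icc 1 n := Finset.Icc_subset_Icc le_rfl hkn
      have memF : ∀ (v : ℕ) (C : Finset ℕ),
          (C ∈ (Finset.Icc 1 n).powerset.filter
            (fun B => MLE B (Finset.Icc 1 k) ∧ ∑ a ∈ B, a = v)) ↔
          (C ⊆ Finset.Icc 1 k ∧ ∑ a ∈ C, a = v) := by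
        intro v C
        simp only [Finset.mem_filter, Finset.mem_powerset]
        constructor
        · rintro ⟨hCn, hmle, hsum⟩
          exact ⟨(mle_Icc_iff C hCn).1 hmle, hsum⟩
        · rintro ⟨hCk, hsum⟩
          exact ⟨hCk.trans hsub, mle_of_subset hCk, hsum⟩
      apply Finset.card_bij' (fun C _ => Finset.Icc 1 k \ C) (fun C _ => Finset.Icc 1 k \ C)
      · intro C hC
        rw [memF] at hC ⊢
        obtain ⟨h1, h2⟩ := hC
        have hsumeq := Finset.sum_sdiff (f := id) h1
        simp only [id] at hsumeq
        exact ⟨Finset.sdiff_subset, by omega⟩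
      · intro C hC
        rw [memF] at hC ⊢
        obtain ⟨h1, h2⟩ := hC
        have hsumeq := Finset.sum_sdiff (f := id) h1
        simp only [id] at hsumeq
        exact ⟨Finset.sdiff_subset, by omega⟩
      · intro C hC
        rw [memF] at hC
        exact Finset.sdiff_sdiff_eq_self hC.1
      · intro C hC
        rw [memF] at hC
        exact Finset.sdiff_sdiff_eq_self hC.1
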